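/- Let $a,b,c \in \mathbb{R}[u]$ with $\gcd(a,c)=\gcd(b,c)=1$, not all zero, and let $n = \max\{\deg a, \deg b, \deg c\}$. If $(p,q)$ is a basis of the free module $\mathrm{Syz}(a,b,c)$ with $\deg p = \mu$ and $\deg q = \nu$ (where the degree of a triple is the maximum of the degrees of its components), then $\mu + \nu = n$. -/

import Mathlib

open Polynomial

/-- The degree of a triple of polynomials: the maximum of the degrees of the components. -/
noncomputable def tripleDeg (x : ℝ[X] × ℝ[X] × ℝ[X]) : ℕ :=
  max x.1.natDegree (max x.2.1.natDegree x.2.2.natDegree)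

/-- Membership in the syzygy module `Syz(a,b,c)`. -/
def InSyz (a b c : ℝ[X]) (x : ℝ[X] × ℝ[X] × ℝ[X]) : Prop :=
  x.1 * a + x.2.1 * b + x.2.2 * c = 0

private lemma ndeg_le_of_eq_mul {a L f : ℝ[X]} {k : ℕ} (hL : L ≠ 0) (hLd : L.natDegree = 0)
    (h : f = a * L) (hf : f.natDegree ≤ k) : a.natDegree ≤ k := by
  rcases eq_or_ne a 0 with rfl | ha
  · simp
  · rwa [h, natDegree_mul ha hL, hLd, add_zero] at hf

private lemma le_ndeg_of_eq_mul {a L f : ℝ[X]} {k : ℕ} (hL : L ≠ 0) (hLd : L.natDegree = 0)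
    (h : f = a * L) (hfne : f ≠ 0) (hk : k ≤ f.natDegree) : k ≤ a.natDegree := by
  have ha : a ≠ 0 := by rintro rfl; simp at h; exact hfne h
  rwa [h, natDegree_mul ha hL, hLd, add_zero] at hk

private lemma natDeg_lt_of_coeff_zero {f : ℝ[X]} {n : ℕ} (hn : 0 < n)
    (h1 : f.natDegree ≤ n) (h2 : f.coeff n = 0) : f.natDegree < n := by
  rcases lt_or_eq_of_le h1 with h | h
  · exact h
  · rcases eq_or_ne f 0 with rfl | hf
    · simpa using hn
    · rw [← h] at h2
      exact absurd (Polynomial.leadingCoeff_eq_zero.mp h2) hf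

private lemma coeff_max3 {f g h : ℝ[X]} {m : ℕ}
    (hm : max f.natDegree (max g.natDegree h.natDegree) = m)
    (hne : ¬(f = 0 ∧ g = 0 ∧ h = 0)) :
    f.coeff m ≠ 0 ∨ g.coeff m ≠ 0 ∨ h.coeff m ≠ 0 := by
  have key : ∀ e : ℝ[X], e ≠ 0 → e.natDegree = m → e.coeff m ≠ 0 := by
    intro e he hd
    rw [← hd]
    exact fun hc => he (Polynomial.leadingCoeff_eq_zero.mp hc)
  have hfm : f.natDegree ≤ m := hm ▸ le_max_left _ _
  have hgm : g.natDegree ≤ m := by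
    rw [← hm]; exact le_trans (le_max_left _ _) (le_max_right _ _)
  have hhm : h.natDegree ≤ m := by
    rw [← hm]; exact le_trans (le_max_right _ _) (le_max_right _ _)
  have hor : f.natDegree = m ∨ g.natDegree = m ∨ h.natDegree = m := by
    rcases max_choice f.natDegree (max g.natDegree h.natDegree) with h1 | h1
    · exact Or.inl (by rw [← hm, h1])
    · rcases max_choice g.natDegree h.natDegree with h2 | h2
      · exact Or.inr (Or.inl (by rw [← hm, h1, h2]))
      · exact Or.inr (Or.inr (by rw [← hm, h1, h2]))
  by_cases hf : f = 0
  · by_cases hg : g = 0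
    · have hh : h ≠ 0 := fun hh => hne ⟨hf, hg, hh⟩
      have : h.natDegree = m := by
        rcases hor with h1 | h1 | h1
        · rw [hf] at h1; simp at h1; omega
        · rw [hg] at h1; simp at h1; omega
        · exact h1
      exact Or.inr (Or.inr (key h hh this))
    · -- g ≠ 0
      rcases hor with h1 | h1 | h1
      · rw [hf] at h1; simp at h1
        exact Or.inr (Or.inl (key g hg (by omega)))
      · exact Or.inr (Or.inl (key g hg h1))
      · by_cases hh : h = 0
        · rw [hh] at h1; simp at h1
          exact Or.inr (Or.inl (key g hg (by omega)))
        · exact Or.inr (Or.inr (key h hh h1))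
  · rcases hor with h1 | h1 | h1
    · exact Or.inl (key f hf h1)
    · by_cases hg : g = 0
      · rw [hg] at h1; simp at h1
        exact Or.inl (key f hf (by omega))
      · exact Or.inr (Or.inl (key g hg h1))
    · by_cases hh : h = 0
      · rw [hh] at h1; simp at h1
        exact Or.inl (key f hf (by omega))
      · exact Or.inr (Or.inr (key h hh h1))

private lemma cross_ne_zero {P1 P2 P3 Q1 Q2 Q3 : ℝ}
    (hP : P1 ≠ 0 ∨ P2 ≠ 0 ∨ P3 ≠ 0)
    (hdep : ∀ β : ℝ, ¬(Q1 = β * P1 ∧ Q2 = β * P2 ∧ Q3 = β * P3)) :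
    ¬(P2 * Q3 - P3 * Q2 = 0 ∧ P3 * Q1 - P1 * Q3 = 0 ∧ P1 * Q2 - P2 * Q1 = 0) := by
  rintro ⟨w1, w2, w3⟩
  rcases hP with h1 | h2 | h3
  · exact hdep (Q1 / P1) ⟨by field_simp, by field_simp; linear_combination w3,
      by field_simp; linear_combination -w2⟩
  · exact hdep (Q2 / P2) ⟨by field_simp; linear_combination -w3, by field_simp,
      by field_simp; linear_combination w1⟩
  · exact hdep (Q3 / P3) ⟨by field_simp; linear_combination w2,
      by field_simp; linear_combination -w1, by field_simp⟩

/-- Degree relation for a μ-basis: if `(p,q)` is a basis of the free module `Syz(a,b,c)`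
of degrees `μ`, `ν` with `μ` minimal (a μ-basis), then `μ + ν = n` where
`n = max(deg a, deg b, deg c)`. -/
theorem mu_basis_degree_sum (a b c : ℝ[X])
    (hac : IsCoprime a c) (hbc : IsCoprime b c)
    (hne : ¬(a = 0 ∧ b = 0 ∧ c = 0))
    (p q : ℝ[X] × ℝ[X] × ℝ[X])
    (hp : InSyz a b c p) (hq : InSyz a b c q)
    (hspan : ∀ x, InSyz a b c x → ∃ s t : ℝ[X], x = s • p + t • q)
    (hind : ∀ s t : ℝ[X], s • p + t • q = 0 → s = 0 ∧ t = 0)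
    (μ ν : ℕ) (hμ : tripleDeg p = μ) (hν : tripleDeg q = ν)
    (hμmin : ∀ x, InSyz a b c x → x ≠ 0 → μ ≤ tripleDeg x)
    (hνmin : ∀ x, InSyz a b c x → (∀ s : ℝ[X], x ≠ s • p) → ν ≤ tripleDeg x) :
    μ + ν = max a.natDegree (max b.natDegree c.natDegree) := by
  obtain ⟨p1, p2, p3⟩ := p
  obtain ⟨q1, q2, q3⟩ := q
  have hpS : p1 * a + p2 * b + p3 * c = 0 := hp
  have hqS : q1 * a + q2 * b + q3 * c = 0 := hq
  simp only [tripleDeg] at hμ hν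
  obtain ⟨A, C0, hAC⟩ := hac
  -- degree bounds on components
  have hp1 : p1.natDegree ≤ μ := hμ ▸ le_max_left _ _
  have hp2 : p2.natDegree ≤ μ := hμ ▸ le_trans (le_max_left _ _) (le_max_right _ _)
  have hp3 : p3.natDegree ≤ μ := hμ ▸ le_trans (le_max_right _ _) (le_max_right _ _)
  have hq1 : q1.natDegree ≤ ν := hν ▸ le_max_left _ _
  have hq2 : q2.natDegree ≤ ν := hν ▸ le_trans (le_max_left _ _) (le_max_right _ _)
  have hq3 : q3.natDegree ≤ ν := hν ▸ le_trans (le_max_right _ _) (le_max_right _ _)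
  -- p and q are nonzero
  have hpne : (p1, p2, p3) ≠ (0 : ℝ[X] × ℝ[X] × ℝ[X]) := by
    intro h
    have := (hind 1 0 (by rw [h]; simp)).1
    exact one_ne_zero this
  have hqne : (q1, q2, q3) ≠ (0 : ℝ[X] × ℝ[X] × ℝ[X]) := by
    intro h
    have := (hind 0 1 (by rw [h]; simp)).2
    exact one_ne_zero this
  have hμν : μ ≤ ν := hν ▸ hμmin _ hq hqne
  -- Bezout syzygies
  obtain ⟨s1, t1, hx1⟩ := hspan (1 - a * A, 0, -(a * C0))
    (show (1 - a * A) * a + 0 * b + -(a * C0) * c = 0 by linear_combination (-a) * hAC)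
  obtain ⟨s2, t2, hx2⟩ := hspan (-(b * A), 1, -(b * C0))
    (show -(b * A) * a + 1 * b + -(b * C0) * c = 0 by linear_combination (-b) * hAC)
  obtain ⟨s3, t3, hx3⟩ := hspan (-(c * A), 0, 1 - c * C0)
    (show -(c * A) * a + 0 * b + (1 - c * C0) * c = 0 by linear_combination (-c) * hAC)
  simp only [Prod.smul_mk, Prod.mk_add_mk, Prod.mk.injEq, smul_eq_mul] at hx1 hx2 hx3
  obtain ⟨e11, e12, e13⟩ := hx1
  obtain ⟨e21, e22, e23⟩ := hx2
  obtain ⟨e31, e32, e33⟩ := hx3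
  set L : ℝ[X] := A * (p2 * q3 - p3 * q2) + C0 * (p1 * q2 - p2 * q1) with hLdef
  have hw1 : p2 * q3 - p3 * q2 = a * L := by
    linear_combination (p2 * q3 - p3 * q2) * e11 + (p3 * q1 - p1 * q3) * e12 +
      (p1 * q2 - p2 * q1) * e13
  have hw2 : p3 * q1 - p1 * q3 = b * L := by
    linear_combination (p2 * q3 - p3 * q2) * e21 + (p3 * q1 - p1 * q3) * e22 +
      (p1 * q2 - p2 * q1) * e23
  have hw3 : p1 * q2 - p2 * q1 = c * L := by
    linear_combination (p2 * q3 - p3 * q2) * e31 + (p3 * q1 - p1 * q3) * e32 +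
      (p1 * q2 - p2 * q1) * e33
  -- L is a unit
  have hLunit : IsUnit L := by
    set N : Matrix (Fin 3) (Fin 3) ℝ[X] := !![p1, p2, p3; q1, q2, q3; A, 0, C0] with hN
    set M : Matrix (Fin 3) (Fin 3) ℝ[X] := !![s1, t1, a; s2, t2, b; s3, t3, c] with hM
    have hMN : M * N = 1 := by
      refine Matrix.ext fun i j => ?_
      fin_cases i <;> fin_cases j <;>
        simp [hM, hN, Matrix.mul_apply, Fin.sum_univ_three, Matrix.one_apply] <;>
        first
          | linear_combination -e11 | linear_combination -e12 | linear_combination -e13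
          | linear_combination -e21 | linear_combination -e22 | linear_combination -e23
          | linear_combination -e31 | linear_combination -e32 | linear_combination -e33
    have hdet : M.det * N.det = 1 := by rw [← Matrix.det_mul, hMN, Matrix.det_one]
    have : IsUnit N.det := IsUnit.of_mul_eq_one _ (by rw [mul_comm]; exact hdet)
    have hNL : N.det = L := by
      rw [hN, Matrix.det_fin_three]
      simp [Matrix.cons_val_zero, Matrix.cons_val_one]
      ring
    rwa [hNL] at this
  have hL0 : L ≠ 0 := hLunit.ne_zero
  have hLd : L.natDegree = 0 := natDegree_eq_zero_of_isUnit hLunit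
  -- upper bound: n ≤ μ + ν
  have hwd1 : (p2 * q3 - p3 * q2).natDegree ≤ μ + ν :=
    (natDegree_sub_le _ _).trans (max_le (natDegree_mul_le.trans (add_le_add hp2 hq3))
      (natDegree_mul_le.trans (add_le_add hp3 hq2)))
  have hwd2 : (p3 * q1 - p1 * q3).natDegree ≤ μ + ν :=
    (natDegree_sub_le _ _).trans (max_le (natDegree_mul_le.trans (add_le_add hp3 hq1))
      (natDegree_mul_le.trans (add_le_add hp1 hq3)))
  have hwd3 : (p1 * q2 - p2 * q1).natDegree ≤ μ + ν :=
    (natDegree_sub_le _ _).trans (max_le (natDegree_mul_le.trans (add_le_add hp1 hq2))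
      (natDegree_mul_le.trans (add_le_add hp2 hq1)))
  have hub : max a.natDegree (max b.natDegree c.natDegree) ≤ μ + ν :=
    max_le (ndeg_le_of_eq_mul hL0 hLd hw1 hwd1)
      (max_le (ndeg_le_of_eq_mul hL0 hLd hw2 hwd2) (ndeg_le_of_eq_mul hL0 hLd hw3 hwd3))
  -- leading coefficient vectors
  have hPne : p1.coeff μ ≠ 0 ∨ p2.coeff μ ≠ 0 ∨ p3.coeff μ ≠ 0 :=
    coeff_max3 hμ (fun ⟨h1, h2, h3⟩ => hpne (by rw [h1, h2, h3]; rfl))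
  -- independence of the leading vectors
  have hdep : ∀ β : ℝ, ¬(q1.coeff ν = β * p1.coeff μ ∧ q2.coeff ν = β * p2.coeff μ ∧
      q3.coeff ν = β * p3.coeff μ) := by
    rintro β ⟨hb1, hb2, hb3⟩
    set e : ℝ[X] := Polynomial.C β * X ^ (ν - μ) with he
    have hco : ∀ f g : ℝ[X], f.natDegree ≤ μ → (g - e * f).coeff ν = g.coeff ν - β * f.coeff μ := by
      intro f g _
      have h2 : (X ^ (ν - μ) * f).coeff ν = f.coeff μ := by
        have h3 := Polynomial.coeff_X_pow_mul f (ν - μ) μ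
        rwa [show μ + (ν - μ) = ν from by omega] at h3
      rw [coeff_sub, he, mul_assoc, coeff_C_mul, h2]
    have hdeg : ∀ f g : ℝ[X], f.natDegree ≤ μ → g.natDegree ≤ ν →
        (g - e * f).natDegree ≤ ν := by
      intro f g hf hg
      refine (natDegree_sub_le _ _).trans (max_le hg ?_)
      refine natDegree_mul_le.trans ?_
      have : e.natDegree ≤ ν - μ := natDegree_mul_le.trans (by simp)
      omega
    have hq'syz : InSyz a b c (q1 - e * p1, q2 - e * p2, q3 - e * p3) := by
      show (q1 - e * p1) * a + (q2 - e * p2) * b + (q3 - e * p3) * c = 0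
      linear_combination hqS - e * hpS
    have hq'ne : ∀ s : ℝ[X], (q1 - e * p1, q2 - e * p2, q3 - e * p3) ≠ s • (p1, p2, p3) := by
      intro s hcon
      simp only [Prod.smul_mk, smul_eq_mul, Prod.mk.injEq] at hcon
      obtain ⟨c1, c2, c3⟩ := hcon
      have := hind (s + e) (-1) (by
        show ((s + e) * p1 + (-1) * q1, (s + e) * p2 + (-1) * q2, (s + e) * p3 + (-1) * q3)
          = ((0 : ℝ[X]), (0 : ℝ[X]), (0 : ℝ[X]))
        rw [Prod.mk.injEq, Prod.mk.injEq]
        exact ⟨by linear_combination -c1, by linear_combination -c2, by linear_combination -c3⟩)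
      exact absurd this.2 (by norm_num)
    have hc1 : (q1 - e * p1).coeff ν = 0 := by rw [hco p1 q1 hp1, hb1]; ring
    have hc2 : (q2 - e * p2).coeff ν = 0 := by rw [hco p2 q2 hp2, hb2]; ring
    have hc3 : (q3 - e * p3).coeff ν = 0 := by rw [hco p3 q3 hp3, hb3]; ring
    rcases Nat.eq_zero_or_pos ν with hν0 | hν0
    · -- all components are zero
      have hz : ∀ f g : ℝ[X], f.natDegree ≤ μ → g.natDegree ≤ ν → (g - e * f).coeff ν = 0 →
          g - e * f = 0 := by
        intro f g hf hg hcz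
        have := eq_C_of_natDegree_le_zero (hν0 ▸ hdeg f g hf hg)
        rw [this, show (g - e * f).coeff 0 = 0 from hν0 ▸ hcz, map_zero]
      have z1 := hz p1 q1 hp1 hq1 hc1
      have z2 := hz p2 q2 hp2 hq2 hc2
      have z3 := hz p3 q3 hp3 hq3 hc3
      exact hq'ne 0 (by rw [z1, z2, z3]; simp)
    · have hlt1 := natDeg_lt_of_coeff_zero hν0 (hdeg p1 q1 hp1 hq1) hc1
      have hlt2 := natDeg_lt_of_coeff_zero hν0 (hdeg p2 q2 hp2 hq2) hc2
      have hlt3 := natDeg_lt_of_coeff_zero hν0 (hdeg p3 q3 hp3 hq3) hc3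
      have hle := hνmin _ hq'syz hq'ne
      simp only [tripleDeg] at hle
      have : max (q1 - e * p1).natDegree (max (q2 - e * p2).natDegree (q3 - e * p3).natDegree)
          < ν := max_lt hlt1 (max_lt hlt2 hlt3)
      omega
  -- cross product of leading vectors is nonzero
  have hcross := cross_ne_zero hPne hdep
  rw [not_and_or, not_and_or] at hcross
  -- lower bound: μ + ν ≤ n
  have hlb : μ + ν ≤ max a.natDegree (max b.natDegree c.natDegree) := by
    rcases hcross with hW | hW | hW
    · have hcoeff : (p2 * q3 - p3 * q2).coeff (μ + ν) =
          p2.coeff μ * q3.coeff ν - p3.coeff μ * q2.coeff ν := by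
        rw [coeff_sub, coeff_mul_add_eq_of_natDegree_le hp2 hq3, coeff_mul_add_eq_of_natDegree_le hp3 hq2]
      have hWne : (p2 * q3 - p3 * q2).coeff (μ + ν) ≠ 0 := by rw [hcoeff]; intro h; exact hW h
      have h1 : μ + ν ≤ a.natDegree :=
        le_ndeg_of_eq_mul hL0 hLd hw1 (fun h => hWne (by rw [h]; simp))
          (le_natDegree_of_ne_zero hWne)
      exact h1.trans (le_max_left _ _)
    · have hcoeff : (p3 * q1 - p1 * q3).coeff (μ + ν) =
          p3.coeff μ * q1.coeff ν - p1.coeff μ * q3.coeff ν := by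
        rw [coeff_sub, coeff_mul_add_eq_of_natDegree_le hp3 hq1, coeff_mul_add_eq_of_natDegree_le hp1 hq3]
      have hWne : (p3 * q1 - p1 * q3).coeff (μ + ν) ≠ 0 := by rw [hcoeff]; intro h; exact hW h
      have h1 : μ + ν ≤ b.natDegree :=
        le_ndeg_of_eq_mul hL0 hLd hw2 (fun h => hWne (by rw [h]; simp))
          (le_natDegree_of_ne_zero hWne)
      exact h1.trans ((le_max_left _ _).trans (le_max_right _ _))
    · have hcoeff : (p1 * q2 - p2 * q1).coeff (μ + ν) =
          p1.coeff μ * q2.coeff ν - p2.coeff μ * q1.coeff ν := by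
        rw [coeff_sub, coeff_mul_add_eq_of_natDegree_le hp1 hq2, coeff_mul_add_eq_of_natDegree_le hp2 hq1]
      have hWne : (p1 * q2 - p2 * q1).coeff (μ + ν) ≠ 0 := by rw [hcoeff]; intro h; exact hW h
      have h1 : μ + ν ≤ c.natDegree :=
        le_ndeg_of_eq_mul hL0 hLd hw3 (fun h => hWne (by rw [h]; simp))
          (le_natDegree_of_ne_zero hWne)
      exact h1.trans ((le_max_right _ _).trans (le_max_right _ _))
  omega
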